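/- arXiv:2503.07848 — 2 statements merged into one kernel-verified Lean document; each statement's English description precedes it below -/
import Mathlib

section
/- Let l be a positive integer, H a real symmetric positive definite l×l matrix, δ > 0 a real number, b ∈ ℝ^l with b ≠ 0, and c ∈ ℝ. Then the function x ↦ c + bᵀx attains a minimum over the set {x ∈ ℝ^l : (1/2)xᵀHx ≤ δ}; this minimum value equals c − √(2δ · bᵀH⁻¹b), and it is attained uniquely at the point x* = −(1/φ*) H⁻¹ b, where φ* = √(bᵀH⁻¹b / (2δ)). -/
open Matrix

/-- Infeasible-case trust-region subproblem: the linear function `x ↦ c + bᵀx` attains a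
minimum over the ellipsoid `{x : (1/2) xᵀHx ≤ δ}`, the minimum value is
`c − √(2δ · bᵀH⁻¹b)`, and it is attained uniquely at `x* = −(1/φ*) H⁻¹ b` with
`φ* = √(bᵀH⁻¹b / (2δ))`. -/
theorem stmt_0 (l : ℕ) (hl : 0 < l) (H : Matrix (Fin l) (Fin l) ℝ)
    (hHsymm : H.IsSymm) (hH : H.PosDef) (δ : ℝ) (hδ : 0 < δ)
    (b : Fin l → ℝ) (hb : b ≠ 0) (c : ℝ) :
    letI φstar : ℝ := Real.sqrt ((b ⬝ᵥ H⁻¹ *ᵥ b) / (2 * δ))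
    letI xstar : Fin l → ℝ := -(1 / φstar) • (H⁻¹ *ᵥ b)
    (1 / 2) * (xstar ⬝ᵥ H *ᵥ xstar) ≤ δ ∧
      c + b ⬝ᵥ xstar = c - Real.sqrt (2 * δ * (b ⬝ᵥ H⁻¹ *ᵥ b)) ∧
      ∀ x : Fin l → ℝ, (1 / 2) * (x ⬝ᵥ H *ᵥ x) ≤ δ →
        (c + b ⬝ᵥ xstar ≤ c + b ⬝ᵥ x ∧ (c + b ⬝ᵥ x = c + b ⬝ᵥ xstar → x = xstar)) := by
  set β := b ⬝ᵥ H⁻¹ *ᵥ b with hβ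
  set φstar : ℝ := Real.sqrt (β / (2 * δ)) with hφ
  set xstar : Fin l → ℝ := -(1 / φstar) • (H⁻¹ *ᵥ b) with hxs
  have hβpos : 0 < β := by
    have := hH.inv.dotProduct_mulVec_pos hb
    simpa [hβ] using this
  have hφpos : 0 < φstar := by
    rw [hφ]
    exact Real.sqrt_pos.mpr (div_pos hβpos (by linarith))
  have hφne : φstar ≠ 0 := ne_of_gt hφpos
  have hφsq : φstar ^ 2 = β / (2 * δ) := by
    rw [hφ, Real.sq_sqrt (le_of_lt (div_pos hβpos (by linarith)))]
  have hHH : H * H⁻¹ = 1 := Matrix.mul_nonsing_inv H hH.det_pos.ne'.isUnit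
  have hHx : H *ᵥ xstar = -(1 / φstar) • b := by
    rw [hxs, Matrix.mulVec_smul, Matrix.mulVec_mulVec, hHH, Matrix.one_mulVec]
  have hsym : ∀ x y : Fin l → ℝ, x ⬝ᵥ H *ᵥ y = y ⬝ᵥ H *ᵥ x := by
    intro x y
    rw [Matrix.dotProduct_mulVec, ← Matrix.mulVec_transpose, hHsymm.eq,
      dotProduct_comm]
  have hvb : (H⁻¹ *ᵥ b) ⬝ᵥ b = β := by rw [dotProduct_comm]
  have hquad : xstar ⬝ᵥ H *ᵥ xstar = 2 * δ := by
    rw [hHx, hxs, smul_dotProduct, dotProduct_smul, hvb,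
      smul_eq_mul, smul_eq_mul]
    have h2 : (1 / φstar) ^ 2 * β = 2 * δ := by
      rw [div_pow, one_pow, div_mul_eq_mul_div, hφsq]
      field_simp
    nlinarith [h2]
  have hbxs : b ⬝ᵥ xstar = -(β / φstar) := by
    rw [hxs, dotProduct_smul, ← hβ, smul_eq_mul]
    ring
  have hsqrt : β / φstar = Real.sqrt (2 * δ * β) := by
    have h1 : Real.sqrt (2 * δ * β) * φstar = β := by
      rw [hφ, ← Real.sqrt_mul (by positivity)]
      rw [show 2 * δ * β * (β / (2 * δ)) = β ^ 2 by field_simp]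
      exact Real.sqrt_sq hβpos.le
    exact (div_eq_iff hφne).mpr h1.symm
  refine ⟨by rw [hquad]; linarith, by rw [hbxs, hsqrt]; ring, ?_⟩
  intro x hx
  have hble : ∀ y : Fin l → ℝ, b ⬝ᵥ y = -φstar * (xstar ⬝ᵥ H *ᵥ y) := by
    intro y
    have hb' : b = (-φstar) • (H *ᵥ xstar) := by
      rw [hHx, smul_smul]
      rw [show -φstar * -(1 / φstar) = 1 by field_simp]
      simp
    rw [hb', smul_dotProduct, smul_eq_mul, dotProduct_comm,
      hsym y xstar]
  have hexp : 0 ≤ x ⬝ᵥ H *ᵥ x - 2 * (xstar ⬝ᵥ H *ᵥ x) + 2 * δ := by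
    have h0 : 0 ≤ (x - xstar) ⬝ᵥ H *ᵥ (x - xstar) := by
      have := hH.posSemidef.dotProduct_mulVec_nonneg (x - xstar)
      simpa using this
    rw [Matrix.mulVec_sub, sub_dotProduct, dotProduct_sub,
      dotProduct_sub, hquad, hsym x xstar] at h0
    linarith
  have hq : xstar ⬝ᵥ H *ᵥ x ≤ 2 * δ := by linarith
  constructor
  · rw [hble x, hble xstar, hquad]
    nlinarith
  · intro heq
    rw [hble x, hble xstar, hquad] at heq
    have hq2 : xstar ⬝ᵥ H *ᵥ x = 2 * δ := by
      have := mul_left_cancel₀ (neg_ne_zero.mpr hφne) (by linarith : -φstar * (xstar ⬝ᵥ H *ᵥ x) = -φstar * (2 * δ))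
      exact this
    have h0 : (x - xstar) ⬝ᵥ H *ᵥ (x - xstar) = 0 := by
      have hle : (x - xstar) ⬝ᵥ H *ᵥ (x - xstar) ≤ 0 := by
        rw [Matrix.mulVec_sub, sub_dotProduct, dotProduct_sub,
          dotProduct_sub, hquad, hsym x xstar, hq2]
        linarith
      have hge : 0 ≤ (x - xstar) ⬝ᵥ H *ᵥ (x - xstar) := by
        have := hH.posSemidef.dotProduct_mulVec_nonneg (x - xstar)
        simpa using this
      linarith
    by_contra hne
    have hne' : x - xstar ≠ 0 := sub_ne_zero.mpr hne
    have := hH.dotProduct_mulVec_pos hne'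
    simp only [star_trivial] at this
    linarith [h0 ▸ this]
end

section
/- Let l be a positive integer, H a real symmetric positive definite l×l matrix, δ > 0 a real number, g, b0, b1 ∈ ℝ^l, c0, c1 ∈ ℝ, and λ > 0. Define q = gᵀH⁻¹g, r0 = gᵀH⁻¹b0, r1 = gᵀH⁻¹b1, s0 = b0ᵀH⁻¹b0, s1 = b1ᵀH⁻¹b1, t = b0ᵀH⁻¹b1, assume s0 s1 − t² ≠ 0, and set ν0* = (λ(s1 c0 − t c1) + t r1 − s1 r0)/(s0 s1 − t²) and ν1* = (λ(s0 c1 − t c0) + t r0 − s0 r1)/(s0 s1 − t²). Then the dual function value D(λ, ν0*, ν1*) = −(1/(2λ))(g + ν0* b0 + ν1* b1)ᵀH⁻¹(g + ν0* b0 + ν1* b1) + ν0* c0 + ν1* c1 − λδ equals f₁(λ) = (1/(2λ))((s1 r0² + s0 r1² − 2 t r0 r1)/(s0 s1 − t²) − q) + (λ/2)((s1 c0² + s0 c1² − 2 t c0 c1)/(s0 s1 − t²) − 2δ) + (t r1 c0 + t r0 c1 − s1 r0 c0 − s0 r1 c1)/(s0 s1 − t²). -/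
open Matrix

lemma symm_bilin {l : ℕ} {M : Matrix (Fin l) (Fin l) ℝ} (hM : M.IsSymm)
    (a b : Fin l → ℝ) : a ⬝ᵥ M *ᵥ b = b ⬝ᵥ M *ᵥ a := by
  rw [Matrix.dotProduct_mulVec, ← Matrix.mulVec_transpose, hM.eq, dotProduct_comm]

/-- The dual function evaluated at the case-1 multipliers `(ν0*, ν1*)` equals the paper's
case-1 dual function `f₁(λ)` (both linear constraints active). -/
theorem stmt_8 (l : ℕ) (hl : 0 < l) (H : Matrix (Fin l) (Fin l) ℝ)
    (hHsymm : H.IsSymm) (hH : H.PosDef) (δ : ℝ) (hδ : 0 < δ)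
    (g b0 b1 : Fin l → ℝ) (c0 c1 : ℝ) (lam : ℝ) (hlam : 0 < lam) :
    letI q : ℝ := g ⬝ᵥ H⁻¹ *ᵥ g
    letI r0 : ℝ := g ⬝ᵥ H⁻¹ *ᵥ b0
    letI r1 : ℝ := g ⬝ᵥ H⁻¹ *ᵥ b1
    letI s0 : ℝ := b0 ⬝ᵥ H⁻¹ *ᵥ b0
    letI s1 : ℝ := b1 ⬝ᵥ H⁻¹ *ᵥ b1
    letI t : ℝ := b0 ⬝ᵥ H⁻¹ *ᵥ b1
    s0 * s1 - t ^ 2 ≠ 0 →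
    letI ν0star : ℝ := (lam * (s1 * c0 - t * c1) + t * r1 - s1 * r0) / (s0 * s1 - t ^ 2)
    letI ν1star : ℝ := (lam * (s0 * c1 - t * c0) + t * r0 - s0 * r1) / (s0 * s1 - t ^ 2)
    letI w : Fin l → ℝ := g + ν0star • b0 + ν1star • b1
    (-(1 / (2 * lam)) * (w ⬝ᵥ H⁻¹ *ᵥ w) + ν0star * c0 + ν1star * c1 - lam * δ =
      (1 / (2 * lam)) *
          ((s1 * r0 ^ 2 + s0 * r1 ^ 2 - 2 * t * r0 * r1) / (s0 * s1 - t ^ 2) - q) +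
        (lam / 2) *
          ((s1 * c0 ^ 2 + s0 * c1 ^ 2 - 2 * t * c0 * c1) / (s0 * s1 - t ^ 2) - 2 * δ) +
        (t * r1 * c0 + t * r0 * c1 - s1 * r0 * c0 - s0 * r1 * c1) / (s0 * s1 - t ^ 2)) := by
  intro hdet
  have hMsymm : (H⁻¹).IsSymm := by rw [Matrix.IsSymm, Matrix.transpose_nonsing_inv, hHsymm.eq]
  set q : ℝ := g ⬝ᵥ H⁻¹ *ᵥ g with hq
  set r0 : ℝ := g ⬝ᵥ H⁻¹ *ᵥ b0 with hr0
  set r1 : ℝ := g ⬝ᵥ H⁻¹ *ᵥ b1 with hr1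
  set s0 : ℝ := b0 ⬝ᵥ H⁻¹ *ᵥ b0 with hs0
  set s1 : ℝ := b1 ⬝ᵥ H⁻¹ *ᵥ b1 with hs1
  set t : ℝ := b0 ⬝ᵥ H⁻¹ *ᵥ b1 with ht
  set ν0 : ℝ := (lam * (s1 * c0 - t * c1) + t * r1 - s1 * r0) / (s0 * s1 - t ^ 2) with hν0
  set ν1 : ℝ := (lam * (s0 * c1 - t * c0) + t * r0 - s0 * r1) / (s0 * s1 - t ^ 2) with hν1
  have hw : (g + ν0 • b0 + ν1 • b1) ⬝ᵥ H⁻¹ *ᵥ (g + ν0 • b0 + ν1 • b1) =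
      q + 2 * ν0 * r0 + 2 * ν1 * r1 + ν0 ^ 2 * s0 + ν1 ^ 2 * s1 + 2 * ν0 * ν1 * t := by
    simp only [Matrix.mulVec_add, Matrix.mulVec_smul, dotProduct_add,
      add_dotProduct, smul_dotProduct, dotProduct_smul,
      smul_eq_mul]
    rw [symm_bilin hMsymm b0 g, symm_bilin hMsymm b1 g, symm_bilin hMsymm b1 b0]
    rw [← hq, ← hr0, ← hr1, ← hs0, ← hs1, ← ht]
    ring
  rw [hw, hν0, hν1]
  have h2 : (2:ℝ) * lam ≠ 0 := by positivity
  have hdet' : s1 * s0 - t ^ 2 ≠ 0 := by rwa [mul_comm]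
  field_simp
  ring
end
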